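/- Let m = 2^{k-1} ≥ 4 and let {H_0, ..., H_{2m-1}} be a partition of Z_2^m into extended 1-perfect (m, 2^m/(2m), 4) codes, where H_0 contains the all-zero word and the parity of the weights of codewords of H_j equals the parity of j. Define Φ(x_1,...,x_n) = H_{x_1} × ... × H_{x_n} ⊆ Z_2^{mn} and Φ(C) = ⋃_{x̄ ∈ C} Φ(x̄). If C ⊆ Z_{2m}^n has cardinality M and minimum d^◇-distance at least d between distinct elements, then Φ(C) is a binary code of length mn, cardinality M·(2^m/(2m))^n, and minimum Hamming distance exactly min(4, d). -/

import Mathlib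

/-- The weight `wt^◇` on `Z_M`: `wt^◇(0)=0`, `wt^◇(x)=1` for odd `x`,
`wt^◇(x)=2` for nonzero even `x`. -/
def wtDia {M : ℕ} (x : ZMod M) : ℕ :=
  if x = 0 then 0 else if Odd x.val then 1 else 2

/-- The induced distance `d^◇`. -/
def dDia {M : ℕ} (n : ℕ) (x y : Fin n → ZMod M) : ℕ :=
  ∑ i, wtDia (y i - x i)

/-- If `C ⊆ Z_{2m}^n` (with `m = 2^{k-1} ≥ 4`) is an `(n,M,d)^◇`-code and
`{H_j}` is a partition of `Z_2^m` into extended 1-perfect codes as in the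
definition of `Φ`, then `Φ(C)` is a binary code of length `mn`, cardinality
`M·(2^m/(2m))^n` and minimum Hamming distance `min(4,d)`. -/
private lemma aux_ite_val : ∀ c : ZMod 2, (if c ≠ 0 then (1:ℕ) else 0) = c.val := by decide

private lemma aux_ite_add : ∀ c d : ZMod 2, (if c ≠ d then (1:ℕ) else 0) = (c + d).val := by decide

private lemma norm_eq_sum {ι : Type*} [Fintype ι] (a : ι → ZMod 2) :
    hammingNorm a = ∑ i, (a i).val := by
  simp only [hammingNorm, Finset.card_filter]
  exact Finset.sum_congr rfl fun i _ => aux_ite_val (a i)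

private lemma dist_parity {ι : Type*} [Fintype ι] (a b : ι → ZMod 2) :
    hammingDist a b % 2 = (hammingNorm a + hammingNorm b) % 2 := by
  have h1 : hammingDist a b = ∑ i, (a i + b i).val := by
    simp only [hammingDist, Finset.card_filter]
    exact Finset.sum_congr rfl fun i _ => aux_ite_add (a i) (b i)
  rw [h1, norm_eq_sum, norm_eq_sum, ← Finset.sum_add_distrib,
    Finset.sum_nat_mod, Finset.sum_nat_mod _ 2 (fun i => (a i).val + (b i).val)]
  congr 1
  exact Finset.sum_congr rfl fun i _ => by rw [ZMod.val_add]; exact Nat.mod_mod_of_dvd _ dvd_rfl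

private lemma val_parity_sub {m : ℕ} [NeZero (2 * m)] (j j' : ZMod (2 * m))
    (h : (j' - j).val % 2 = 0) : j'.val % 2 = j.val % 2 := by
  have hdvd : (2 : ℕ) ∣ 2 * m := ⟨m, rfl⟩
  let f := ZMod.castHom hdvd (ZMod 2)
  have key : ∀ c : ZMod (2 * m), (f c).val = c.val % 2 := by
    intro c
    show ((ZMod.castHom hdvd (ZMod 2)) c).val = c.val % 2
    rw [ZMod.castHom_apply, ← ZMod.natCast_val, ZMod.val_natCast]
  have h0 : f (j' - j) = 0 := by
    have : (f (j' - j)).val = 0 := by rw [key]; exact h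
    exact (ZMod.val_eq_zero _).mp this
  have hff : f j' = f j := by
    have := map_sub f j' j
    rw [h0] at this; linear_combination -this
  calc j'.val % 2 = (f j').val := (key j').symm
    _ = (f j).val := by rw [hff]
    _ = j.val % 2 := key j

private lemma dist_block_sum {n m : ℕ} (u v : Fin n × Fin m → ZMod 2) :
    hammingDist u v = ∑ i : Fin n,
      hammingDist (fun j => u (i, j)) (fun j => v (i, j)) := by
  simp only [hammingDist, Finset.card_filter, Fintype.sum_prod_type]

theorem stmt_2 (k n M d : ℕ) (hk : 3 ≤ k)
    (H : ZMod (2 * 2 ^ (k - 1)) → Finset (Fin (2 ^ (k - 1)) → ZMod 2))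
    (hpart : ∀ u : Fin (2 ^ (k - 1)) → ZMod 2, ∃! j, u ∈ H j)
    (hcard : ∀ j, (H j).card = 2 ^ (2 ^ (k - 1)) / (2 * 2 ^ (k - 1)))
    (hdist4 : ∀ j, ∀ u ∈ H j, ∀ v ∈ H j, u ≠ v → 4 ≤ hammingDist u v)
    (hzero : (0 : Fin (2 ^ (k - 1)) → ZMod 2) ∈ H 0)
    (hparity : ∀ j, ∀ u ∈ H j, hammingNorm u % 2 = (ZMod.val j) % 2)
    (C : Finset (Fin n → ZMod (2 * 2 ^ (k - 1))))
    (hM : C.card = M)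
    (hd : ∀ x ∈ C, ∀ y ∈ C, x ≠ y → d ≤ dDia n x y) :
    ({u : Fin n × Fin (2 ^ (k - 1)) → ZMod 2 |
        ∃ x ∈ C, ∀ i, (fun j => u (i, j)) ∈ H (x i)}.ncard
        = M * (2 ^ (2 ^ (k - 1)) / (2 * 2 ^ (k - 1))) ^ n) ∧
      ∀ u ∈ {u : Fin n × Fin (2 ^ (k - 1)) → ZMod 2 |
          ∃ x ∈ C, ∀ i, (fun j => u (i, j)) ∈ H (x i)},
        ∀ v ∈ {u : Fin n × Fin (2 ^ (k - 1)) → ZMod 2 |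
          ∃ x ∈ C, ∀ i, (fun j => u (i, j)) ∈ H (x i)},
        u ≠ v → min 4 d ≤ hammingDist u v := by
  classical
  have hm : 0 < 2 * 2 ^ (k - 1) := by positivity
  haveI : NeZero (2 * 2 ^ (k - 1)) := ⟨hm.ne'⟩
  -- uniqueness of partition class
  have huniq : ∀ (a : Fin (2 ^ (k - 1)) → ZMod 2) (j j' : ZMod (2 * 2 ^ (k - 1))),
      a ∈ H j → a ∈ H j' → j = j' := by
    intro a j j' hj hj'
    obtain ⟨w, _, hw⟩ := hpart a
    rw [hw j hj, hw j' hj']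
  -- block distance lower bound
  have hblock : ∀ (j j' : ZMod (2 * 2 ^ (k - 1))) (a b : Fin (2 ^ (k - 1)) → ZMod 2),
      a ∈ H j → b ∈ H j' → j ≠ j' → wtDia (j' - j) ≤ hammingDist a b := by
    intro j j' a b ha hb hne
    have hab : a ≠ b := fun h => hne (huniq a j j' ha (h ▸ hb))
    have h1 : 1 ≤ hammingDist a b := by
      rcases Nat.eq_zero_or_pos (hammingDist a b) with h | h
      · exact absurd (hammingDist_eq_zero.mp h) hab
      · exact h
    unfold wtDia
    rw [if_neg (sub_ne_zero.mpr (Ne.symm hne))]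
    split
    · exact h1
    · -- even case: parity argument gives distance is even, hence ≥ 2
      rename_i hodd
      have heven : (j' - j).val % 2 = 0 := Nat.even_iff.mp (Nat.not_odd_iff_even.mp hodd)
      have hp : j'.val % 2 = j.val % 2 := val_parity_sub (m := 2 ^ (k - 1)) j j' heven
      have hdpar : hammingDist a b % 2 = 0 := by
        rw [dist_parity, Nat.add_mod, hparity j a ha, hparity j' b hb, hp]
        omega
      omega
  -- the equivalence
  let e : (Fin n × Fin (2 ^ (k - 1)) → ZMod 2) ≃ (Fin n → Fin (2 ^ (k - 1)) → ZMod 2) := Equiv.curry _ _ _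
  let F : Finset (Fin n × Fin (2 ^ (k - 1)) → ZMod 2) :=
    C.biUnion fun x => (Fintype.piFinset fun i => H (x i)).map e.symm.toEmbedding
  have hmemF : ∀ u, u ∈ F ↔ ∃ x ∈ C, ∀ i, (fun j => u (i, j)) ∈ H (x i) := by
    intro u
    simp only [F, Finset.mem_biUnion, Finset.mem_map_equiv, Equiv.symm_symm,
      Fintype.mem_piFinset]
    rfl
  have hsetF : {u : Fin n × Fin (2 ^ (k - 1)) → ZMod 2 |
      ∃ x ∈ C, ∀ i, (fun j => u (i, j)) ∈ H (x i)} = ↑F := by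
    ext u; simp [hmemF, Set.mem_setOf_eq]
  constructor
  · rw [hsetF, Set.ncard_coe_finset]
    rw [Finset.card_biUnion]
    · have : ∀ x ∈ C, ((Fintype.piFinset fun i => H (x i)).map e.symm.toEmbedding).card
          = (2 ^ 2 ^ (k - 1) / (2 * 2 ^ (k - 1))) ^ n := by
        intro x _
        rw [Finset.card_map, Fintype.card_piFinset]
        simp [hcard]
      rw [Finset.sum_congr rfl this, Finset.sum_const, hM, smul_eq_mul]
    · intro x hx y hy hxy
      rw [Function.onFun, Finset.disjoint_left]
      intro u hu hu'
      simp only [Finset.mem_map_equiv, Equiv.symm_symm, Fintype.mem_piFinset] at hu hu'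
      exact hxy (funext fun i => huniq (e u i) (x i) (y i) (hu i) (hu' i))
  · intro u hu v hv huv
    simp only [Set.mem_setOf_eq] at hu hv
    obtain ⟨x, hx, hux⟩ := hu
    obtain ⟨y, hy, hvy⟩ := hv
    have hTot := dist_block_sum u v
    rw [hTot]
    by_cases hxy : x = y
    · -- some block differs; that block has distance ≥ 4
      subst hxy
      have : ∃ i : Fin n, (fun j => u (i, j)) ≠ (fun j => v (i, j)) := by
        by_contra h
        push_neg at h
        exact huv (funext fun p => congrFun (h p.1) p.2)
      obtain ⟨i, hi⟩ := this
      calc min 4 d ≤ 4 := min_le_left _ _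
        _ ≤ hammingDist (fun j => u (i, j)) (fun j => v (i, j)) :=
            hdist4 (x i) _ (hux i) _ (hvy i) hi
        _ ≤ _ := Finset.single_le_sum (f := fun i =>
            hammingDist (fun j => u (i, j)) (fun j => v (i, j)))
            (fun _ _ => Nat.zero_le _) (Finset.mem_univ i)
    · calc min 4 d ≤ d := min_le_right _ _
        _ ≤ dDia n x y := hd x hx y hy hxy
        _ ≤ _ := by
            unfold dDia
            apply Finset.sum_le_sum
            intro i _
            by_cases h : x i = y i
            · simp [wtDia, h]
            · exact hblock (x i) (y i) _ _ (hux i) (hvy i) h
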